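/- Theorem 1(2), necessity direction (MPQP): Let H be a real symmetric positive definite n×n matrix, A a real m×n matrix, E a real m×p matrix, b ∈ ℝᵐ, θ ∈ ℝᵖ. Let I ⊆ {1,…,m} be an index set, let Ã, Ẽ, b̃ denote the submatrices/subvector of A, E, b formed by the rows in I, and Ā, Ē, b̄ those formed by the rows in the complement of I; assume the rows of Ã are linearly independent. Suppose x ∈ ℝⁿ and y ∈ ℝᵐ satisfy H x + Aᵀ y = 0, y ≥ 0, yᵢ = 0 for every i ∉ I, à x = b̃ + Ẽ θ, and Ā x < b̄ + Ē θ. Then θ ∈ 𝒫_p ∩ 𝒫_d, where 𝒫_p = {θ : Ā H⁻¹ Ãᵀ (à H⁻¹ Ãᵀ)⁻¹ (b̃ + Ẽ θ) − b̄ − Ē θ < 0} and 𝒫_d = {θ : (à H⁻¹ Ãᵀ)⁻¹ (b̃ + Ẽ θ) ≤ 0}. -/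

import Mathlib

open Matrix

/-- Theorem 1(2) of the paper, necessity direction (MPQP).  The active index
set is `I = Set.range σ`; `At, Et, bt` are the rows of `A, E, b` in `I`
(assumed linearly independent) and `Ab, Eb, bb` the rows in its complement.
If `(x, y)` satisfies the KKT conditions with active set exactly `I`, then
`θ` lies in the critical region `𝒫_p ∩ 𝒫_d`. -/
theorem mpqp_necessity {m n p k : ℕ}
    (H : Matrix (Fin n) (Fin n) ℝ)
    (hHsym : Hᵀ = H)
    (hHpd : ∀ v : Fin n → ℝ, v ≠ 0 → 0 < v ⬝ᵥ H.mulVec v)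
    (A : Matrix (Fin m) (Fin n) ℝ) (E : Matrix (Fin m) (Fin p) ℝ) (b : Fin m → ℝ)
    (θ : Fin p → ℝ)
    (σ : Fin k → Fin m) (hσ : Function.Injective σ)
    (At : Matrix (Fin k) (Fin n) ℝ) (Et : Matrix (Fin k) (Fin p) ℝ) (bt : Fin k → ℝ)
    (Ab : Matrix {i : Fin m // i ∉ Set.range σ} (Fin n) ℝ)
    (Eb : Matrix {i : Fin m // i ∉ Set.range σ} (Fin p) ℝ)
    (bb : {i : Fin m // i ∉ Set.range σ} → ℝ)
    (hAt : At = A.submatrix σ id) (hEt : Et = E.submatrix σ id) (hbt : bt = b ∘ σ)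
    (hAb : Ab = A.submatrix Subtype.val id) (hEb : Eb = E.submatrix Subtype.val id)
    (hbb : bb = b ∘ Subtype.val)
    (hrows : LinearIndependent ℝ (fun i : Fin k => At i))
    (x : Fin n → ℝ) (y : Fin m → ℝ)
    (hstat : H.mulVec x + Aᵀ.mulVec y = 0)
    (hy : 0 ≤ y)
    (hsupp : ∀ i : Fin m, i ∉ Set.range σ → y i = 0)
    (hactive : At.mulVec x = bt + Et.mulVec θ)
    (hinactive : ∀ i : {i : Fin m // i ∉ Set.range σ},
      Ab.mulVec x i < (bb + Eb.mulVec θ) i) :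
    (∀ i : {i : Fin m // i ∉ Set.range σ},
      (Ab * H⁻¹ * Atᵀ * (At * H⁻¹ * Atᵀ)⁻¹).mulVec (bt + Et.mulVec θ) i
        - (bb + Eb.mulVec θ) i < 0) ∧
    (At * H⁻¹ * Atᵀ)⁻¹.mulVec (bt + Et.mulVec θ) ≤ 0 := by
  -- H is positive definite
  have hHpd' : H.PosDef := by
    refine Matrix.PosDef.of_dotProduct_mulVec_pos ?_ fun ⦃v⦄ hv => ?_
    · show Hᴴ = H
      simpa using hHsym
    · simpa using hHpd v hv
  have hHinv : H⁻¹.PosDef := hHpd'.inv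
  have hHunit : IsUnit H := hHpd'.isUnit
  -- the matrix M = At * H⁻¹ * Atᵀ is positive definite
  set M := At * H⁻¹ * Atᵀ with hM
  have hvecMul : Function.Injective At.vecMul := Matrix.vecMul_injective_iff.mpr hrows
  have hMpd : M.PosDef := by
    refine Matrix.PosDef.of_dotProduct_mulVec_pos ?_ fun ⦃v⦄ hv => ?_
    · have := (hHinv.posSemidef.mul_mul_conjTranspose_same At).isHermitian
      simpa using this
    · have hw : Atᵀ *ᵥ v ≠ 0 := by
        intro h
        apply hv
        apply hvecMul
        show v ᵥ* At = 0 ᵥ* At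
        rw [Matrix.zero_vecMul, ← Matrix.mulVec_transpose]
        exact h
      have := hHinv.dotProduct_mulVec_pos hw
      simp only [star_trivial] at this ⊢
      calc (0:ℝ) < (Atᵀ *ᵥ v) ⬝ᵥ H⁻¹ *ᵥ (Atᵀ *ᵥ v) := this
        _ = v ⬝ᵥ M *ᵥ v := by
            rw [hM, ← Matrix.mulVec_mulVec, ← Matrix.mulVec_mulVec,
              Matrix.dotProduct_mulVec v, ← Matrix.mulVec_transpose]
  have hMunit : IsUnit M := hMpd.isUnit
  have hMinv : M⁻¹ * M = 1 := Matrix.nonsing_inv_mul M (isUnit_iff_isUnit_det M |>.mp hMunit)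
  -- the reduced multiplier
  set z : Fin k → ℝ := y ∘ σ with hz
  have hz0 : 0 ≤ z := fun i => hy (σ i)
  -- Aᵀ y = Atᵀ z
  have hAy : Aᵀ *ᵥ y = Atᵀ *ᵥ z := by
    ext j
    simp only [Matrix.mulVec, dotProduct, Matrix.transpose_apply]
    rw [← Finset.sum_subset (Finset.subset_univ ((Finset.univ : Finset (Fin k)).image σ))]
    · rw [Finset.sum_image (fun a _ b _ h => hσ h)]
      simp [hAt, hz]
    · intro i _ hi
      have : i ∉ Set.range σ := by
        simp only [Finset.mem_image, Finset.mem_univ, true_and] at hi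
        rintro ⟨l, rfl⟩; exact hi ⟨l, rfl⟩
      rw [hsupp i this, mul_zero]
  -- H x = -(Atᵀ z)
  have hHx : H *ᵥ x = -(Atᵀ *ᵥ z) := by
    have h := hstat
    rw [hAy] at h
    rw [eq_neg_iff_add_eq_zero]
    exact h
  -- x = H⁻¹ applied
  have hxeq : H⁻¹ *ᵥ (H *ᵥ x) = x := by
    rw [Matrix.mulVec_mulVec, Matrix.nonsing_inv_mul H
      (isUnit_iff_isUnit_det H |>.mp hHunit), Matrix.one_mulVec]
  -- M z = -(bt + Et θ)
  have hAtz : Atᵀ *ᵥ z = -(H *ᵥ x) := by rw [hHx, neg_neg]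
  have hMz : M *ᵥ z = -(bt + Et.mulVec θ) := by
    rw [hM, ← Matrix.mulVec_mulVec, ← Matrix.mulVec_mulVec, hAtz, Matrix.mulVec_neg,
      hxeq, Matrix.mulVec_neg, hactive]
  -- M⁻¹ (bt + Et θ) = -z
  have hkey : M⁻¹ *ᵥ (bt + Et.mulVec θ) = -z := by
    have : M⁻¹ *ᵥ (M *ᵥ z) = z := by
      rw [Matrix.mulVec_mulVec, hMinv, Matrix.one_mulVec]
    rw [← this, ← Matrix.mulVec_neg, hMz, neg_neg]
  constructor
  · intro i
    have hx2 : (Ab * H⁻¹ * Atᵀ * M⁻¹) *ᵥ (bt + Et.mulVec θ) = Ab *ᵥ x := by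
      rw [← Matrix.mulVec_mulVec, hkey, Matrix.mulVec_neg, ← Matrix.mulVec_mulVec,
        hAtz, Matrix.mulVec_neg, neg_neg, ← Matrix.mulVec_mulVec, hxeq]
    have h2 := congrFun hx2 i
    rw [h2]
    linarith [hinactive i]
  · rw [hkey]
    intro i
    simp only [Pi.neg_apply, Pi.zero_apply, neg_nonpos]
    exact hz0 i
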